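/- Let R be a finite commutative ring with identity and P a proper prime ideal. The prime ideal graph Γ_P(R) is isomorphic to the join K_a ∨ K̄_b of a complete graph on a = |P| - 1 vertices and an edgeless graph on b = |R| - |P| vertices. -/

import Mathlib

def primeIdealGraph (R : Type*) [CommRing R] (P : Ideal R) :
    SimpleGraph {x : R // x ≠ 0} where
  Adj x y := x ≠ y ∧ (x : R) * y ∈ P
  symm := by
    refine ⟨?_⟩
    rintro x y ⟨h, hm⟩
    exact ⟨h.symm, by rwa [mul_comm]⟩
  loopless := ⟨by rintro x ⟨h, _⟩; exact h rfl⟩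

def joinGraph {α β : Type*} (G : SimpleGraph α) (H : SimpleGraph β) :
    SimpleGraph (α ⊕ β) where
  Adj u v :=
    Sum.elim (fun x => Sum.elim (fun y => G.Adj x y) (fun _ => True) v)
             (fun x => Sum.elim (fun _ => True) (fun y => H.Adj x y) v) u
  symm := ⟨by rintro (x|x) (y|y) h <;> simp_all [SimpleGraph.adj_comm]⟩
  loopless := ⟨by rintro (x|x) h <;> simp_all⟩

open Classical in
noncomputable def splitEquiv (R : Type*) [CommRing R] (P : Ideal R) :
    {x : R // x ≠ 0} ≃ ({x : R // x ≠ 0 ∧ x ∈ P} ⊕ {x : R // x ∉ P}) where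
  toFun x := if h : (x : R) ∈ P then Sum.inl ⟨x, x.2, h⟩ else Sum.inr ⟨x, h⟩
  invFun := Sum.elim (fun a => ⟨a.1, a.2.1⟩)
    (fun b => ⟨b.1, fun h => b.2 (h ▸ P.zero_mem)⟩)
  left_inv := by rintro ⟨x, hx⟩; by_cases h : x ∈ P <;> simp [h]
  right_inv := by
    rintro (⟨a, ha1, ha2⟩ | ⟨b, hb⟩)
    · simp [ha2]
    · simp [hb]

theorem splitEquiv_of_mem {R : Type*} [CommRing R] {P : Ideal R}
    (x : {x : R // x ≠ 0}) (h : (x : R) ∈ P) :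
    splitEquiv R P x = Sum.inl ⟨x, x.2, h⟩ := by
  simp [splitEquiv, h]

theorem splitEquiv_of_not_mem {R : Type*} [CommRing R] {P : Ideal R}
    (x : {x : R // x ≠ 0}) (h : (x : R) ∉ P) :
    splitEquiv R P x = Sum.inr ⟨x, h⟩ := by
  simp [splitEquiv, h]

/-- `Γ_P(R) ≅ K_a ∨ K̄_b` with `a = |P| - 1` and `b = |R| - |P|`. -/
theorem stmt_3 (R : Type*) [CommRing R] [Fintype R] (P : Ideal R)
    [P.IsPrime] (hP : P ≠ ⊤) :
    Nonempty
      (primeIdealGraph R P ≃g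
        joinGraph (⊤ : SimpleGraph (Fin (Nat.card P - 1)))
          (⊥ : SimpleGraph (Fin (Nat.card R - Nat.card P)))) := by
  classical
  have hcardA : Fintype.card {x : R // x ≠ 0 ∧ x ∈ P} = Nat.card P - 1 := by
    have e : {x : R // x ≠ 0 ∧ x ∈ P} ≃ {y : P // y ≠ 0} :=
      { toFun := fun a => ⟨⟨a.1, a.2.2⟩, by
          simp only [ne_eq, Submodule.mk_eq_zero]; exact a.2.1⟩
        invFun := fun y => ⟨y.1, fun h => y.2 (Subtype.ext h), y.1.2⟩
        left_inv := fun a => rfl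
        right_inv := fun y => rfl }
    rw [Fintype.card_congr e, Nat.card_eq_fintype_card]
    have h2 : Fintype.card {y : P // ¬ y = 0} = Fintype.card P - Fintype.card {y : P // y = 0} :=
      Fintype.card_subtype_compl _
    simpa [Fintype.card_subtype_eq (0 : P)] using h2
  have hcardB : Fintype.card {x : R // x ∉ P} = Nat.card R - Nat.card P := by
    rw [Nat.card_eq_fintype_card, Nat.card_eq_fintype_card]
    have h2 : Fintype.card {x : R // ¬ x ∈ P} = Fintype.card R - Fintype.card {x : R // x ∈ P} :=
      Fintype.card_subtype_compl _
    convert h2 using 2 <;> exact (Fintype.card_congr (Equiv.refl _))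
  have gA : {x : R // x ≠ 0 ∧ x ∈ P} ≃ Fin (Nat.card P - 1) := Fintype.equivFinOfCardEq hcardA
  have gB : {x : R // x ∉ P} ≃ Fin (Nat.card R - Nat.card P) := Fintype.equivFinOfCardEq hcardB
  refine ⟨⟨(splitEquiv R P).trans (Equiv.sumCongr gA gB), ?_⟩⟩
  rintro ⟨x, hx⟩ ⟨y, hy⟩
  by_cases hxP : x ∈ P <;> by_cases hyP : y ∈ P
  · rw [show (primeIdealGraph R P).Adj ⟨x, hx⟩ ⟨y, hy⟩ ↔ (⟨x, hx⟩ : {x : R // x ≠ 0}) ≠ ⟨y, hy⟩ ∧ x * y ∈ P from Iff.rfl]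
    simp only [Equiv.trans_apply, Equiv.sumCongr_apply,
      splitEquiv_of_mem (⟨x, hx⟩ : {x : R // x ≠ 0}) hxP,
      splitEquiv_of_mem (⟨y, hy⟩ : {x : R // x ≠ 0}) hyP,
      Sum.map_inl, joinGraph, Sum.elim_inl, SimpleGraph.top_adj]
    constructor
    · intro h
      refine ⟨?_, P.mul_mem_right y hxP⟩
      intro he
      exact h (congrArg gA (by cases he; rfl))
    · rintro ⟨h, -⟩ he
      have hxy : x = y := congrArg Subtype.val (gA.injective he)
      exact h (Subtype.ext hxy)
  · simp only [Equiv.trans_apply, Equiv.sumCongr_apply,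
      splitEquiv_of_mem (⟨x, hx⟩ : {x : R // x ≠ 0}) hxP,
      splitEquiv_of_not_mem (⟨y, hy⟩ : {x : R // x ≠ 0}) hyP,
      Sum.map_inl, Sum.map_inr, joinGraph, primeIdealGraph, Sum.elim_inl, Sum.elim_inr]
    refine ⟨fun _ => ⟨?_, P.mul_mem_right y hxP⟩, fun _ => trivial⟩
    intro he; cases he; exact hyP hxP
  · simp only [Equiv.trans_apply, Equiv.sumCongr_apply,
      splitEquiv_of_not_mem (⟨x, hx⟩ : {x : R // x ≠ 0}) hxP,
      splitEquiv_of_mem (⟨y, hy⟩ : {x : R // x ≠ 0}) hyP,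
      Sum.map_inl, Sum.map_inr, joinGraph, primeIdealGraph, Sum.elim_inl, Sum.elim_inr]
    refine ⟨fun _ => ⟨?_, P.mul_mem_left x hyP⟩, fun _ => trivial⟩
    intro he; cases he; exact hxP hyP
  · simp only [Equiv.trans_apply, Equiv.sumCongr_apply,
      splitEquiv_of_not_mem (⟨x, hx⟩ : {x : R // x ≠ 0}) hxP,
      splitEquiv_of_not_mem (⟨y, hy⟩ : {x : R // x ≠ 0}) hyP,
      Sum.map_inr, joinGraph, primeIdealGraph, Sum.elim_inr, SimpleGraph.bot_adj]
    constructor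
    · intro h; exact h.elim
    · rintro ⟨-, hm⟩
      rcases (Ideal.IsPrime.mem_or_mem ‹P.IsPrime› hm) with h | h
      · exact hxP h
      · exact hyP h
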